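/- arXiv:2105.03618 — 3 statements merged into one kernel-verified Lean document; each statement's English description precedes it below -/
import Mathlib

section
/- Let α < −1 and define J_y = |y|^α e^{−|y|} for y ∈ ℤ∖{0}. Define G_β(x) = ∑_{n=1}^∞ ∑_{(y₁,…,yₙ)∈(ℤ∖{0})ⁿ, y₁+⋯+yₙ=x} βⁿ ∏ᵢ J_{yᵢ}. Then there exists β₀ > 0 such that for all 0 < β < β₀ there is a constant c_β with G_β(x) ≤ c_β |x|^α e^{−|x|} for all nonzero integers x. -/
open scoped ENNReal

/-- The path sum `G_β(x) = ∑_{n≥1} ∑_{y₁+⋯+yₙ=x, yᵢ≠0} βⁿ ∏ᵢ J_{yᵢ}`,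
encoded as a sum over nonempty lists of nonzero integer steps summing to `x`. -/
noncomputable def pathSum (J : ℤ → ℝ) (β : ℝ) (x : ℤ) : ℝ≥0∞ :=
  ∑' γ : {l : List ℤ // l ≠ [] ∧ (∀ y ∈ l, y ≠ 0) ∧ l.sum = x},
    ENNReal.ofReal (β ^ γ.1.length * (γ.1.map J).prod)

namespace Stmt4Aux

/-- The real step weight. -/
noncomputable def J (α : ℝ) (y : ℤ) : ℝ := |(y : ℝ)| ^ α * Real.exp (-|(y : ℝ)|)

/-- The step weight in `ℝ≥0∞`. -/
noncomputable def Jn (α : ℝ) (y : ℤ) : ℝ≥0∞ := ENNReal.ofReal (J α y)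

lemma J_nonneg (α : ℝ) (y : ℤ) : 0 ≤ J α y := by
  unfold J; positivity

lemma J_zero (α : ℝ) (hα : α < -1) : J α 0 = 0 := by
  unfold J
  rw [Int.cast_zero, abs_zero, Real.zero_rpow (by linarith), zero_mul]

lemma Jn_zero (α : ℝ) (hα : α < -1) : Jn α 0 = 0 := by
  rw [Jn, J_zero α hα, ENNReal.ofReal_zero]

lemma one_le_abs_cast {y : ℤ} (hy : y ≠ 0) : (1 : ℝ) ≤ |(y : ℝ)| := by
  rw [← Int.cast_abs]
  exact_mod_cast Int.one_le_abs hy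

lemma J_le_one (α : ℝ) (hα : α < -1) (y : ℤ) : J α y ≤ 1 := by
  rcases eq_or_ne y 0 with h | h
  · rw [h, J_zero α hα]; norm_num
  · have h1 : (1 : ℝ) ≤ |(y : ℝ)| := one_le_abs_cast h
    have h2 : |(y : ℝ)| ^ α ≤ 1 :=
      Real.rpow_le_one_of_one_le_of_nonpos h1 (by linarith)
    have he : Real.exp (-|(y : ℝ)|) ≤ 1 := by
      rw [Real.exp_le_one_iff]; linarith
    calc J α y ≤ 1 * 1 :=
          mul_le_mul h2 he (le_of_lt (Real.exp_pos _)) zero_le_one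
      _ = 1 := by ring

lemma Jn_le_one (α : ℝ) (hα : α < -1) (y : ℤ) : Jn α y ≤ 1 := by
  rw [Jn, ← ENNReal.ofReal_one]
  exact ENNReal.ofReal_le_ofReal (J_le_one α hα y)

lemma Jn_le_pow (α : ℝ) (y : ℤ) : Jn α y ≤ ENNReal.ofReal (|(y : ℝ)| ^ α) := by
  rw [Jn]
  apply ENNReal.ofReal_le_ofReal
  calc J α y ≤ |(y : ℝ)| ^ α * 1 := by
        unfold J
        apply mul_le_mul_of_nonneg_left _ (by positivity)
        rw [Real.exp_le_one_iff]
        simp [abs_nonneg, neg_nonpos]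
    _ = _ := by ring

/-- Power part of the pointwise convolution bound. -/
lemma pow_part (α : ℝ) (hα : α < -1) {a b c : ℝ} (ha : 1 ≤ a) (hb : 1 ≤ b) (hc : 1 ≤ c)
    (h : c ≤ a + b) : a ^ α * b ^ α ≤ (2 : ℝ) ^ (-α) * (a ^ α + b ^ α) * c ^ α := by
  have hα0 : α ≤ 0 := by linarith
  have hap : 0 ≤ a ^ α := Real.rpow_nonneg (by linarith) _
  have hbp : 0 ≤ b ^ α := Real.rpow_nonneg (by linarith) _
  have hcp : 0 ≤ c ^ α := Real.rpow_nonneg (by linarith) _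
  have h2p : (0 : ℝ) ≤ 2 ^ (-α) := Real.rpow_nonneg (by norm_num) _
  have hhalf : ((c : ℝ) / 2) ^ α = 2 ^ (-α) * c ^ α := by
    rw [Real.div_rpow (by linarith) (by norm_num), Real.rpow_neg (by norm_num)]
    ring
  rcases le_total a b with hab | hab
  · have hb2 : c / 2 ≤ b := by linarith
    have h1 : b ^ α ≤ (c / 2) ^ α :=
      Real.rpow_le_rpow_of_nonpos (by linarith) hb2 hα0
    rw [hhalf] at h1
    calc a ^ α * b ^ α ≤ a ^ α * (2 ^ (-α) * c ^ α) :=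
          mul_le_mul_of_nonneg_left h1 hap
      _ ≤ 2 ^ (-α) * (a ^ α + b ^ α) * c ^ α := by nlinarith [mul_nonneg (mul_nonneg h2p hcp) hbp]
  · have ha2 : c / 2 ≤ a := by linarith
    have h1 : a ^ α ≤ (c / 2) ^ α :=
      Real.rpow_le_rpow_of_nonpos (by linarith) ha2 hα0
    rw [hhalf] at h1
    calc a ^ α * b ^ α ≤ (2 ^ (-α) * c ^ α) * b ^ α :=
          mul_le_mul_of_nonneg_right h1 hbp
      _ ≤ 2 ^ (-α) * (a ^ α + b ^ α) * c ^ α := by nlinarith [mul_nonneg (mul_nonneg h2p hcp) hap]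

/-- Pointwise convolution bound. -/
lemma key_pointwise (α : ℝ) (hα : α < -1) (x y : ℤ) (hx : x ≠ 0) :
    J α y * J α (x - y) ≤
      (2 : ℝ) ^ (-α) * (|(y : ℝ)| ^ α + |((x - y : ℤ) : ℝ)| ^ α) * J α x := by
  rcases eq_or_ne y 0 with rfl | hy
  · rw [J_zero α hα, zero_mul]
    exact mul_nonneg (by positivity) (J_nonneg α x)
  rcases eq_or_ne y x with rfl | hyx
  · rw [sub_self, J_zero α hα, mul_zero]
    exact mul_nonneg (by positivity) (J_nonneg α y)
  have ha : (1 : ℝ) ≤ |(y : ℝ)| := one_le_abs_cast hy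
  have hb : (1 : ℝ) ≤ |((x - y : ℤ) : ℝ)| :=
    one_le_abs_cast (sub_ne_zero.mpr (Ne.symm hyx))
  have hc : (1 : ℝ) ≤ |(x : ℝ)| := one_le_abs_cast hx
  have htri : |(x : ℝ)| ≤ |(y : ℝ)| + |((x - y : ℤ) : ℝ)| := by
    push_cast
    have := abs_add_le (y : ℝ) ((x : ℝ) - (y : ℝ))
    simpa using this
  have hexp : Real.exp (-|(y : ℝ)|) * Real.exp (-|((x - y : ℤ) : ℝ)|) ≤
      Real.exp (-|(x : ℝ)|) := by
    rw [← Real.exp_add]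
    exact Real.exp_le_exp.mpr (by linarith)
  have hpow := pow_part α hα ha hb hc htri
  unfold J
  calc (|(y : ℝ)| ^ α * Real.exp (-|(y : ℝ)|)) *
        (|((x - y : ℤ) : ℝ)| ^ α * Real.exp (-|((x - y : ℤ) : ℝ)|))
      = (|(y : ℝ)| ^ α * |((x - y : ℤ) : ℝ)| ^ α) *
        (Real.exp (-|(y : ℝ)|) * Real.exp (-|((x - y : ℤ) : ℝ)|)) := by ring
    _ ≤ ((2 : ℝ) ^ (-α) * (|(y : ℝ)| ^ α + |((x - y : ℤ) : ℝ)| ^ α) * |(x : ℝ)| ^ α) *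
        Real.exp (-|(x : ℝ)|) :=
        mul_le_mul hpow hexp (by positivity) (by positivity)
    _ = (2 : ℝ) ^ (-α) * (|(y : ℝ)| ^ α + |((x - y : ℤ) : ℝ)| ^ α) *
        (|(x : ℝ)| ^ α * Real.exp (-|(x : ℝ)|)) := by ring

/-- The tail constant `∑_z |z|^α`. -/
noncomputable def Spow (α : ℝ) : ℝ≥0∞ := ∑' z : ℤ, ENNReal.ofReal (|(z : ℝ)| ^ α)

lemma Spow_ne_top (α : ℝ) (hα : α < -1) : Spow α ≠ ∞ := by
  have hs : Summable fun z : ℤ => |(z : ℝ)| ^ α := by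
    have := Real.summable_abs_int_rpow (b := -α) (by linarith)
    simpa using this
  rw [Spow, ← ENNReal.ofReal_tsum_of_nonneg (fun z => by positivity) hs]
  exact ENNReal.ofReal_ne_top

lemma sum_Jn_le (α : ℝ) : ∑' y : ℤ, Jn α y ≤ Spow α :=
  ENNReal.tsum_le_tsum fun y => Jn_le_pow α y

/-- The convolution constant. -/
noncomputable def C0 (α : ℝ) : ℝ≥0∞ := ENNReal.ofReal ((2 : ℝ) ^ (-α)) * (2 * Spow α)

lemma C0_ne_top (α : ℝ) (hα : α < -1) : C0 α ≠ ∞ :=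
  ENNReal.mul_ne_top ENNReal.ofReal_ne_top
    (ENNReal.mul_ne_top (by norm_num) (Spow_ne_top α hα))

/-- The convolution bound in `ℝ≥0∞`. -/
lemma conv_le (α : ℝ) (hα : α < -1) (x : ℤ) (hx : x ≠ 0) :
    ∑' y : ℤ, Jn α y * Jn α (x - y) ≤ C0 α * Jn α x := by
  have h1 : ∀ y : ℤ, Jn α y * Jn α (x - y) ≤
      ENNReal.ofReal ((2 : ℝ) ^ (-α)) *
        (ENNReal.ofReal (|(y : ℝ)| ^ α) + ENNReal.ofReal (|((x - y : ℤ) : ℝ)| ^ α)) *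
        Jn α x := by
    intro y
    rw [Jn, Jn, ← ENNReal.ofReal_mul (J_nonneg α y)]
    calc ENNReal.ofReal (J α y * J α (x - y))
        ≤ ENNReal.ofReal ((2 : ℝ) ^ (-α) *
            (|(y : ℝ)| ^ α + |((x - y : ℤ) : ℝ)| ^ α) * J α x) :=
          ENNReal.ofReal_le_ofReal (key_pointwise α hα x y hx)
      _ = _ := by
          rw [ENNReal.ofReal_mul (by positivity), ENNReal.ofReal_mul (by positivity),
            ENNReal.ofReal_add (by positivity) (by positivity), Jn]
  have h2 : ∑' y : ℤ, ENNReal.ofReal (|((x - y : ℤ) : ℝ)| ^ α) = Spow α := by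
    simpa [Spow] using (Equiv.subLeft x).tsum_eq (fun z : ℤ => ENNReal.ofReal (|(z : ℝ)| ^ α))
  calc ∑' y : ℤ, Jn α y * Jn α (x - y)
      ≤ ∑' y : ℤ, ENNReal.ofReal ((2 : ℝ) ^ (-α)) *
          (ENNReal.ofReal (|(y : ℝ)| ^ α) + ENNReal.ofReal (|((x - y : ℤ) : ℝ)| ^ α)) *
          Jn α x := ENNReal.tsum_le_tsum h1
    _ = ENNReal.ofReal ((2 : ℝ) ^ (-α)) *
          (∑' y : ℤ, (ENNReal.ofReal (|(y : ℝ)| ^ α) + ENNReal.ofReal (|((x - y : ℤ) : ℝ)| ^ α))) *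
          Jn α x := by
        rw [ENNReal.tsum_mul_right, ENNReal.tsum_mul_left]
    _ = C0 α * Jn α x := by
        rw [ENNReal.tsum_add, h2, C0, two_mul, Spow]

/-- Modified weight handling the origin. -/
noncomputable def K (α : ℝ) (x : ℤ) : ℝ≥0∞ := Jn α x + if x = 0 then 1 else 0

lemma Jn_le_K (α : ℝ) (x : ℤ) : Jn α x ≤ K α x := le_self_add

lemma K_ne_zero : True := trivial

/-- The full constant. -/
noncomputable def Cfull (α : ℝ) : ℝ≥0∞ := C0 α + 1 + Spow α

lemma Cfull_ne_top (α : ℝ) (hα : α < -1) : Cfull α ≠ ∞ := by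
  rw [Cfull]
  exact ENNReal.add_ne_top.mpr
    ⟨ENNReal.add_ne_top.mpr ⟨C0_ne_top α hα, by norm_num⟩, Spow_ne_top α hα⟩

lemma convK (α : ℝ) (hα : α < -1) (x : ℤ) :
    ∑' y : ℤ, Jn α y * K α (x - y) ≤ Cfull α * K α x := by
  have hpt : ∀ y : ℤ, Jn α y * K α (x - y)
      = Jn α y * Jn α (x - y) + (if y = x then Jn α y else 0) := by
    intro y
    rw [K, mul_add]
    congr 1
    by_cases h : y = x
    · simp [h]
    · have hne : x - y ≠ 0 := sub_ne_zero.mpr (Ne.symm h)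
      simp [hne, h]
  have hsingle : ∑' y : ℤ, (if y = x then Jn α y else 0) = Jn α x := by
    rw [tsum_eq_single x (fun y hy => if_neg hy)]
    simp
  rw [tsum_congr hpt, ENNReal.tsum_add, hsingle]
  rcases eq_or_ne x 0 with rfl | hx
  · have hconv0 : ∑' y : ℤ, Jn α y * Jn α (0 - y) ≤ Spow α := by
      calc ∑' y : ℤ, Jn α y * Jn α (0 - y) ≤ ∑' y : ℤ, Jn α y * 1 :=
            ENNReal.tsum_le_tsum fun y =>
              mul_le_mul_right (Jn_le_one α hα _) _
        _ = ∑' y : ℤ, Jn α y := by simp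
        _ ≤ Spow α := sum_Jn_le α
    have hK0 : K α 0 = 1 := by rw [K, Jn_zero α hα]; simp
    rw [Jn_zero α hα, hK0, add_zero, mul_one, Cfull]
    calc ∑' y : ℤ, Jn α y * Jn α (0 - y) ≤ Spow α := hconv0
      _ ≤ C0 α + 1 + Spow α := le_add_self
  · have hKx : K α x = Jn α x := by rw [K, if_neg hx, add_zero]
    rw [hKx, Cfull]
    calc (∑' y : ℤ, Jn α y * Jn α (x - y)) + Jn α x
        ≤ C0 α * Jn α x + Jn α x := add_le_add_left (conv_le α hα x hx) _
      _ = (C0 α + 1) * Jn α x := by ring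
      _ ≤ (C0 α + 1 + Spow α) * Jn α x :=
          mul_le_mul_left le_self_add _

/-- Weight of a list. -/
noncomputable def wt (α β : ℝ) (l : List ℤ) : ℝ≥0∞ :=
  ENNReal.ofReal β ^ l.length * (l.map (Jn α)).prod

/-- Sum over lists of a fixed length. -/
noncomputable def Sl (α β : ℝ) (n : ℕ) (x : ℤ) : ℝ≥0∞ :=
  ∑' l : List ℤ,
    if l.length = n ∧ (∀ y ∈ l, y ≠ 0) ∧ l.sum = x then wt α β l else 0

lemma Sl_zero (α β : ℝ) (x : ℤ) : Sl α β 0 x = if x = 0 then 1 else 0 := by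
  rw [Sl, tsum_eq_single ([] : List ℤ)]
  · by_cases hx : x = 0 <;> simp [wt, hx, eq_comm]
  · intro l hl
    rw [if_neg]
    rintro ⟨h, -, -⟩
    exact hl (List.length_eq_zero_iff.mp h)

lemma Sl_succ (α β : ℝ) (hα : α < -1) (n : ℕ) (x : ℤ) :
    Sl α β (n + 1) x = ENNReal.ofReal β * ∑' y : ℤ, Jn α y * Sl α β n (x - y) := by
  classical
  set F : List ℤ → ℝ≥0∞ := fun l =>
    if l.length = n + 1 ∧ (∀ y ∈ l, y ≠ 0) ∧ l.sum = x then wt α β l else 0 with hF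
  have hinj : Function.Injective (fun p : ℤ × List ℤ => p.1 :: p.2) := by
    intro p q h
    simp only [List.cons.injEq] at h
    exact Prod.ext h.1 h.2
  have hsupp : Function.support F ⊆ Set.range (fun p : ℤ × List ℤ => p.1 :: p.2) := by
    intro l hl
    rcases l with _ | ⟨y, l'⟩
    · exfalso
      apply hl
      rw [hF]
      simp
    · exact ⟨(y, l'), rfl⟩
  have hpt : ∀ (y : ℤ) (l : List ℤ), F (y :: l) =
      ENNReal.ofReal β * (Jn α y *
        (if l.length = n ∧ (∀ z ∈ l, z ≠ 0) ∧ l.sum = x - y then wt α β l else 0)) := by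
    intro y l
    by_cases hy : y = 0
    · subst hy
      simp only [hF]
      rw [if_neg (by rintro ⟨-, h2, -⟩; exact (h2 0 (by simp)) rfl)]
      simp [Jn_zero α hα]
    · by_cases hc : l.length = n ∧ (∀ z ∈ l, z ≠ 0) ∧ l.sum = x - y
      · have hcc : (y :: l).length = n + 1 ∧ (∀ z ∈ y :: l, z ≠ 0) ∧ (y :: l).sum = x := by
          refine ⟨by simp [hc.1], fun z hz => ?_, by rw [List.sum_cons, hc.2.2]; ring⟩
          rcases List.mem_cons.mp hz with h | h
          · exact h ▸ hy
          · exact hc.2.1 z h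
        rw [if_pos hc]
        simp only [hF]
        rw [if_pos hcc, wt, wt, List.length_cons, List.map_cons, List.prod_cons, hc.1, Jn]
        ring
      · rw [if_neg hc, mul_zero, mul_zero]
        simp only [hF]
        rw [if_neg]
        rintro ⟨h1, h2, h3⟩
        apply hc
        refine ⟨by simpa using h1, fun z hz => h2 z (List.mem_cons_of_mem _ hz), ?_⟩
        rw [List.sum_cons] at h3
        omega
  calc Sl α β (n + 1) x = ∑' l : List ℤ, F l := rfl
    _ = ∑' p : ℤ × List ℤ, F (p.1 :: p.2) := (hinj.tsum_eq hsupp).symm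
    _ = ∑' (y : ℤ) (l : List ℤ), F (y :: l) :=
        ENNReal.tsum_prod (f := fun (y : ℤ) (l : List ℤ) => F (y :: l))
    _ = ∑' y : ℤ, ENNReal.ofReal β * (Jn α y * Sl α β n (x - y)) := by
        refine tsum_congr fun y => ?_
        rw [tsum_congr (hpt y), ENNReal.tsum_mul_left, ENNReal.tsum_mul_left, Sl]
    _ = _ := ENNReal.tsum_mul_left

lemma Sl_le (α β : ℝ) (hα : α < -1) (n : ℕ) (x : ℤ) :
    Sl α β (n + 1) x ≤
      (ENNReal.ofReal β * Cfull α) ^ n * ENNReal.ofReal β * K α x := by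
  induction n generalizing x with
  | zero =>
    rw [Sl_succ α β hα 0 x]
    have h1 : ∑' y : ℤ, Jn α y * Sl α β 0 (x - y) = Jn α x := by
      rw [tsum_eq_single x]
      · rw [Sl_zero, sub_self, if_pos rfl, mul_one]
      · intro y hy
        rw [Sl_zero, if_neg (fun h => hy (by omega)), mul_zero]
    rw [h1, pow_zero, one_mul]
    exact mul_le_mul_right (Jn_le_K α x) _
  | succ m ih =>
    rw [Sl_succ α β hα (m + 1) x]
    calc ENNReal.ofReal β * ∑' y : ℤ, Jn α y * Sl α β (m + 1) (x - y)
        ≤ ENNReal.ofReal β * ∑' y : ℤ,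
            Jn α y * ((ENNReal.ofReal β * Cfull α) ^ m * ENNReal.ofReal β * K α (x - y)) := by
          gcongr with y
          exact ih (x - y)
      _ = ENNReal.ofReal β * ((ENNReal.ofReal β * Cfull α) ^ m * ENNReal.ofReal β *
            ∑' y : ℤ, Jn α y * K α (x - y)) := by
          congr 1
          rw [← ENNReal.tsum_mul_left]
          exact tsum_congr fun y => by ring
      _ ≤ ENNReal.ofReal β * ((ENNReal.ofReal β * Cfull α) ^ m * ENNReal.ofReal β *
            (Cfull α * K α x)) := by
          gcongr
          exact convK α hα x
      _ = (ENNReal.ofReal β * Cfull α) ^ (m + 1) * ENNReal.ofReal β * K α x := by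
          ring

lemma ofReal_wt (α : ℝ) {β : ℝ} (hβ : 0 ≤ β) (l : List ℤ) :
    ENNReal.ofReal (β ^ l.length * (l.map (J α)).prod) = wt α β l := by
  rw [wt, ENNReal.ofReal_mul (pow_nonneg hβ _), ENNReal.ofReal_pow hβ]
  congr 1
  induction l with
  | nil => simp
  | cons y l ih =>
    rw [List.map_cons, List.map_cons, List.prod_cons, List.prod_cons,
      ENNReal.ofReal_mul (J_nonneg α y), ih, Jn]

lemma pathSum_eq (α : ℝ) {β : ℝ} (hβ : 0 ≤ β) (x : ℤ) :
    pathSum (J α) β x = ∑' n : ℕ, Sl α β (n + 1) x := by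
  classical
  set G : List ℤ → ℝ≥0∞ := fun l =>
    if l ≠ [] ∧ (∀ y ∈ l, y ≠ 0) ∧ l.sum = x then wt α β l else 0 with hG
  have hsupp : Function.support G ⊆
      Set.range (Subtype.val :
        {l : List ℤ // l ≠ [] ∧ (∀ y ∈ l, y ≠ 0) ∧ l.sum = x} → List ℤ) := by
    intro l hl
    rw [Function.mem_support, hG] at hl
    by_cases h : l ≠ [] ∧ (∀ y ∈ l, y ≠ 0) ∧ l.sum = x
    · exact ⟨⟨l, h⟩, rfl⟩
    · exact absurd (if_neg h) hl
  have h1 : pathSum (J α) β x = ∑' l : List ℤ, G l := by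
    rw [pathSum, ← Subtype.val_injective.tsum_eq hsupp]
    refine tsum_congr fun γ => ?_
    simp only [hG]
    rw [if_pos γ.2]
    exact ofReal_wt α hβ γ.1
  rw [h1]
  simp only [Sl]
  rw [ENNReal.tsum_comm]
  refine tsum_congr fun l => ?_
  rcases l with _ | ⟨y, l'⟩
  · simp only [hG]
    rw [if_neg (by simp)]
    simp
  · rw [tsum_eq_single l'.length]
    · by_cases h : (∀ z ∈ y :: l', z ≠ 0) ∧ (y :: l').sum = x
      · rw [if_pos ⟨rfl, h⟩]
        simp only [hG]
        rw [if_pos ⟨List.cons_ne_nil y l', h⟩]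
      · rw [if_neg (fun hh => h ⟨hh.2.1, hh.2.2⟩)]
        simp only [hG]
        rw [if_neg (fun hh => h ⟨hh.2.1, hh.2.2⟩)]
    · intro n hn
      rw [if_neg]
      rintro ⟨hlen, -⟩
      rw [List.length_cons] at hlen
      omega

end Stmt4Aux

theorem stmt4 (α : ℝ) (hα : α < -1) :
    ∃ β₀ > (0 : ℝ), ∀ β : ℝ, 0 < β → β < β₀ →
      ∃ c > (0 : ℝ), ∀ x : ℤ, x ≠ 0 →
        pathSum (fun y => |(y : ℝ)| ^ α * Real.exp (-|(y : ℝ)|)) β x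
          ≤ ENNReal.ofReal (c * |(x : ℝ)| ^ α * Real.exp (-|(x : ℝ)|)) := by
  classical
  set Cf := Stmt4Aux.Cfull α with hCfdef
  have hCf : Cf ≠ ∞ := Stmt4Aux.Cfull_ne_top α hα
  set Ct := Cf.toReal with hCt
  have hCt0 : 0 ≤ Ct := ENNReal.toReal_nonneg
  refine ⟨(Ct + 1)⁻¹, by positivity, ?_⟩
  intro β hβ0 hβ1
  have hβC : ENNReal.ofReal β * Cf < 1 := by
    have hCfe : Cf = ENNReal.ofReal Ct := by
      rw [hCt, ENNReal.ofReal_toReal hCf]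
    rw [hCfe, ← ENNReal.ofReal_mul hβ0.le, ← ENNReal.ofReal_one]
    apply ENNReal.ofReal_lt_ofReal_iff_of_nonneg (by positivity) |>.mpr
    have h1 : β * (Ct + 1) < 1 := by
      rw [← one_div] at hβ1
      exact (lt_div_iff₀ (by positivity)).mp hβ1
    nlinarith
  set T := (1 - ENNReal.ofReal β * Cf)⁻¹ * ENNReal.ofReal β with hTdef
  have hT : T ≠ ∞ := by
    apply ENNReal.mul_ne_top _ ENNReal.ofReal_ne_top
    rw [ENNReal.inv_ne_top]
    exact (tsub_pos_of_lt hβC).ne'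
  refine ⟨T.toReal + 1, by positivity, ?_⟩
  intro x hx
  have hTle : T ≤ ENNReal.ofReal (T.toReal + 1) := by
    calc T = ENNReal.ofReal T.toReal := (ENNReal.ofReal_toReal hT).symm
      _ ≤ _ := ENNReal.ofReal_le_ofReal (by linarith)
  have hb : pathSum (Stmt4Aux.J α) β x ≤ T * Stmt4Aux.K α x := by
    rw [Stmt4Aux.pathSum_eq α hβ0.le x]
    calc ∑' n : ℕ, Stmt4Aux.Sl α β (n + 1) x
        ≤ ∑' n : ℕ, (ENNReal.ofReal β * Cf) ^ n * ENNReal.ofReal β * Stmt4Aux.K α x :=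
          ENNReal.tsum_le_tsum fun n => Stmt4Aux.Sl_le α β hα n x
      _ = (∑' n : ℕ, (ENNReal.ofReal β * Cf) ^ n) * ENNReal.ofReal β * Stmt4Aux.K α x := by
          rw [ENNReal.tsum_mul_right, ENNReal.tsum_mul_right]
      _ = T * Stmt4Aux.K α x := by
          rw [ENNReal.tsum_geometric, hTdef, mul_assoc]
  have hKx : Stmt4Aux.K α x = Stmt4Aux.Jn α x := by
    rw [Stmt4Aux.K, if_neg hx, add_zero]
  have hfinal : pathSum (Stmt4Aux.J α) β x
      ≤ ENNReal.ofReal ((T.toReal + 1) * |(x : ℝ)| ^ α * Real.exp (-|(x : ℝ)|)) := by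
    calc pathSum (Stmt4Aux.J α) β x ≤ T * Stmt4Aux.K α x := hb
      _ = T * Stmt4Aux.Jn α x := by rw [hKx]
      _ ≤ ENNReal.ofReal (T.toReal + 1) * Stmt4Aux.Jn α x := mul_le_mul_left hTle _
      _ = ENNReal.ofReal ((T.toReal + 1) * Stmt4Aux.J α x) := by
          rw [ENNReal.ofReal_mul (by positivity), Stmt4Aux.Jn]
      _ = _ := by rw [Stmt4Aux.J, ← mul_assoc]
  exact hfinal
end

section
/- Let ψ : ℤ_{>0} → ℝ_{>0} be sub-exponential, i.e. lim_{y→∞} ln ψ(y)/y = 0, and suppose ∑_{y≥1} ψ(y) = ∞. Define J_y = ψ(|y|)e^{−|y|} and G_β(x) = ∑_{n≥1} ∑_{y₁+⋯+yₙ=x, yᵢ≠0} βⁿ ∏ᵢ J_{yᵢ} for β > 0 (allowing the value +∞). Then for every β > 0 there exist R ∈ ℤ_{>0} and c > 0 such that for all positive integers x divisible by R, G_β(x) ≥ c^{x/R} e^{−x + x/R}. Consequently, limsup_{x→∞} (1/x) ln G_β(x) ≥ −1 + 1/R > −1. -/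
open scoped ENNReal
open Filter

lemma pathSum_pigeon (ψ : ℕ → ℝ) (hpos : ∀ y : ℕ, 0 < y → 0 < ψ y) (β : ℝ)
    (R N : ℕ) (hR : 0 < R) (hN : 0 < N) (hβ : 0 ≤ β) :
    ∃ s : ℕ, N ≤ s ∧ s ≤ N * R ∧
      ENNReal.ofReal (β ^ N * ((∑ j ∈ Finset.range R, ψ (j + 1)) ^ N / (N * R)) *
          Real.exp (-(s : ℝ)))
        ≤ pathSum (fun y => ψ y.natAbs * Real.exp (-|(y : ℝ)|)) β (s : ℤ) := by
  classical
  set S : ℝ := ∑ j ∈ Finset.range R, ψ (j + 1) with hSdef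
  have hS : 0 < S :=
    Finset.sum_pos (fun j _ => hpos _ (Nat.succ_pos _)) (by simpa using hR.ne')
  set σ : (Fin N → Fin R) → ℕ := fun f => ∑ i, ((f i : ℕ) + 1) with hσdef
  set w : (Fin N → Fin R) → ℝ := fun f => ∏ i, ψ ((f i : ℕ) + 1) with hwdef
  have hw : ∀ f, 0 < w f := fun f => Finset.prod_pos fun i _ => hpos _ (Nat.succ_pos _)
  have htot : ∑ f : Fin N → Fin R, w f = S ^ N := by
    rw [hSdef, ← Fin.sum_univ_eq_sum_range (fun j => ψ (j + 1)) R,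
      ← Fin.prod_const N (∑ j : Fin R, ψ ((j : ℕ) + 1)),
      Finset.prod_univ_sum (fun _ : Fin N => (Finset.univ : Finset (Fin R)))
        (fun _ j => ψ ((j : ℕ) + 1))]
    rw [← Finset.sum_subset (Finset.subset_univ (Fintype.piFinset fun _ => Finset.univ))]
    · simp
  have hσmem : ∀ f, σ f ∈ Finset.Icc N (N * R) := by
    intro f
    rw [Finset.mem_Icc]
    constructor
    · calc N = ∑ _i : Fin N, 1 := by simp
        _ ≤ σ f := Finset.sum_le_sum fun i _ => Nat.le_add_left 1 _
    · calc σ f ≤ ∑ _i : Fin N, R := Finset.sum_le_sum fun i _ => (f i).2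
        _ = N * R := by simp [Finset.sum_const, mul_comm]
  set K := Finset.image σ Finset.univ with hKdef
  have hKne : K.Nonempty := by
    refine ⟨σ (fun _ => ⟨0, hR⟩), Finset.mem_image_of_mem _ (Finset.mem_univ _)⟩
  have hKpos : 0 < K.card := Finset.card_pos.2 hKne
  have hKcard : K.card ≤ N * R := by
    have hsub : K ⊆ Finset.Icc N (N * R) := by
      intro s hs
      obtain ⟨f, -, rfl⟩ := Finset.mem_image.1 hs
      exact hσmem f
    calc K.card ≤ (Finset.Icc N (N * R)).card := Finset.card_le_card hsub
      _ = N * R + 1 - N := Nat.card_Icc _ _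
      _ ≤ N * R := by
          have : 1 ≤ N := hN
          have : N ≤ N * R := Nat.le_mul_of_pos_right N hR
          omega
  have hfib : ∑ s ∈ K, ∑ f ∈ Finset.univ.filter (fun f => σ f = s), w f = S ^ N := by
    rw [Finset.sum_fiberwise_of_maps_to (fun f _ => Finset.mem_image_of_mem σ (Finset.mem_univ f)) w]
    exact htot
  have hexists : ∃ s ∈ K, S ^ N / K.card ≤ ∑ f ∈ Finset.univ.filter (fun f => σ f = s), w f := by
    apply Finset.exists_le_of_sum_le hKne
    rw [hfib, Finset.sum_const, nsmul_eq_mul]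
    rw [mul_div_cancel₀]
    exact_mod_cast hKpos.ne'
  obtain ⟨s, hsK, hsfib⟩ := hexists
  have hsmem : s ∈ Finset.Icc N (N * R) := by
    obtain ⟨f, -, rfl⟩ := Finset.mem_image.1 hsK
    exact hσmem f
  have hsIcc := Finset.mem_Icc.1 hsmem
  refine ⟨s, hsIcc.1, hsIcc.2, ?_⟩
  set F := Finset.univ.filter (fun f => σ f = s) with hFdef
  have hfibge : S ^ N / (N * R) ≤ ∑ f ∈ F, w f := by
    refine le_trans ?_ hsfib
    apply div_le_div_of_nonneg_left (le_of_lt (pow_pos hS N)) (by exact_mod_cast hKpos)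
    exact_mod_cast hKcard
  -- the injection into paths
  set J : ℤ → ℝ := fun y => ψ y.natAbs * Real.exp (-|(y : ℝ)|) with hJdef
  set φ : (Fin N → Fin R) → List ℤ := fun f => List.ofFn (fun i => ((f i : ℕ) : ℤ) + 1) with hφdef
  have hφinj : Function.Injective φ := by
    intro f g hfg
    have := List.ofFn_injective hfg
    funext i
    have h2 := congrFun this i
    ext
    omega
  have hmem : ∀ f ∈ F, (φ f ≠ [] ∧ (∀ y ∈ φ f, y ≠ 0) ∧ (φ f).sum = (s : ℤ)) := by
    intro f hf
    refine ⟨?_, ?_, ?_⟩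
    · apply List.ne_nil_of_length_pos
      simpa [hφdef] using hN
    · intro y hy
      rw [hφdef] at hy
      simp only [List.mem_ofFn, Set.mem_range] at hy
      obtain ⟨i, rfl⟩ := hy
      positivity
    · rw [hφdef]
      simp only [List.sum_ofFn]
      have hfs : σ f = s := (Finset.mem_filter.1 hf).2
      rw [← hfs, hσdef]
      push_cast
      ring
  set ι : {f // f ∈ F} → {l : List ℤ // l ≠ [] ∧ (∀ y ∈ l, y ≠ 0) ∧ l.sum = (s : ℤ)} :=
    fun f => ⟨φ f.1, hmem f.1 f.2⟩ with hιdef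
  have hιinj : Function.Injective ι := by
    intro f g hfg
    exact Subtype.ext (hφinj (congrArg Subtype.val hfg))
  have hterm : ∀ f : {f // f ∈ F},
      β ^ (ι f).1.length * ((ι f).1.map J).prod = β ^ N * Real.exp (-(s : ℝ)) * w f.1 := by
    intro f
    have hfs : σ f.1 = s := (Finset.mem_filter.1 f.2).2
    have hlen : (ι f).1.length = N := by simp [hιdef, hφdef]
    rw [hlen]
    have hmap : ((ι f).1.map J).prod = ∏ i : Fin N, J (((f.1 i : ℕ) : ℤ) + 1) := by
      simp [hιdef, hφdef, List.map_ofFn, List.prod_ofFn, Function.comp]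
    rw [hmap]
    have hJval : ∀ i : Fin N, J (((f.1 i : ℕ) : ℤ) + 1)
        = ψ ((f.1 i : ℕ) + 1) * Real.exp (-(((f.1 i : ℕ) : ℝ) + 1)) := by
      intro i
      have h1 : (((f.1 i : ℕ) : ℤ) + 1) = (((f.1 i : ℕ) + 1 : ℕ) : ℤ) := by push_cast; ring
      simp only [hJdef, h1, Int.natAbs_natCast]
      congr 2
      rw [abs_of_nonneg (by positivity)]
      push_cast
      ring
    rw [Finset.prod_congr rfl (fun i _ => hJval i), Finset.prod_mul_distrib, ← Real.exp_sum]
    have hsum : ∑ i : Fin N, (-(((f.1 i : ℕ) : ℝ) + 1)) = -(s : ℝ) := by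
      rw [← hfs, hσdef]
      push_cast
      rw [← Finset.sum_neg_distrib]
    rw [hsum, hwdef]
    ring
  calc ENNReal.ofReal (β ^ N * (S ^ N / (N * R)) * Real.exp (-(s : ℝ)))
      ≤ ENNReal.ofReal (β ^ N * Real.exp (-(s : ℝ)) * ∑ f ∈ F, w f) := by
        apply ENNReal.ofReal_le_ofReal
        have h1 : β ^ N * (S ^ N / (N * R)) * Real.exp (-(s : ℝ))
            = (β ^ N * Real.exp (-(s : ℝ))) * (S ^ N / (N * R)) := by ring
        rw [h1]
        exact mul_le_mul_of_nonneg_left hfibge (by positivity)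
    _ = ∑ f ∈ F, ENNReal.ofReal (β ^ N * Real.exp (-(s : ℝ)) * w f) := by
        rw [← ENNReal.ofReal_sum_of_nonneg (fun f _ => by
          have := (hw f).le
          positivity)]
        rw [← Finset.mul_sum]
    _ = ∑' f : {f // f ∈ F},
          ENNReal.ofReal (β ^ ((ι f).1.length) * ((ι f).1.map J).prod) := by
        rw [tsum_fintype]
        rw [Finset.univ_eq_attach, ← Finset.sum_attach F
          (fun f => ENNReal.ofReal (β ^ N * Real.exp (-(s : ℝ)) * w f))]
        exact Finset.sum_congr rfl fun f _ => by rw [hterm f]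
    _ ≤ pathSum J β (s : ℤ) :=
        ENNReal.tsum_comp_le_tsum_of_injective hιinj _

theorem stmt10 (ψ : ℕ → ℝ) (hpos : ∀ y : ℕ, 0 < y → 0 < ψ y)
    (hsub : Tendsto (fun y : ℕ => Real.log (ψ y) / y) atTop (nhds 0))
    (hdiv : ¬ Summable (fun y : ℕ => ψ (y + 1))) :
    ∀ β : ℝ, 0 < β → ∃ R : ℕ, 0 < R ∧
      (∃ c > (0 : ℝ), ∀ x : ℕ, 0 < x → R ∣ x →
        ENNReal.ofReal (c ^ (x / R) * Real.exp (-(x : ℝ) + (x : ℝ) / (R : ℝ)))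
          ≤ pathSum (fun y => ψ y.natAbs * Real.exp (-|(y : ℝ)|)) β (x : ℤ)) ∧
      (-1 : ℝ) < -1 + 1 / (R : ℝ) ∧
      -- `limsup_{x→∞} (1/x) ln G_β(x) ≥ -1 + 1/R`, stated safely in `ℝ≥0∞`:
      ∀ m : ℝ, m < -1 + 1 / (R : ℝ) → ∃ᶠ x : ℕ in atTop,
        ENNReal.ofReal (Real.exp (m * x))
          ≤ pathSum (fun y => ψ y.natAbs * Real.exp (-|(y : ℝ)|)) β (x : ℤ) := by
  intro β hβ
  classical
  have hψnn : ∀ n : ℕ, 0 ≤ ψ (n + 1) := fun n => (hpos _ n.succ_pos).le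
  have htend := (not_summable_iff_tendsto_nat_atTop_of_nonneg hψnn).1 hdiv
  obtain ⟨R, hRS, hR1⟩ :
      ∃ R : ℕ, Real.exp 1 / β ≤ ∑ j ∈ Finset.range R, ψ (j + 1) ∧ 1 ≤ R :=
    ((htend.eventually_ge_atTop (Real.exp 1 / β)).and (eventually_ge_atTop 1)).exists
  have hRpos : 0 < R := hR1
  have hRR : (0 : ℝ) < (R : ℝ) := by exact_mod_cast hRpos
  set S : ℝ := ∑ j ∈ Finset.range R, ψ (j + 1) with hSdef
  have hS : 0 < S := lt_of_lt_of_le (by positivity) hRS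
  have heS : Real.exp 1 ≤ β * S := by
    rw [div_le_iff₀ hβ] at hRS
    linarith [hRS]
  have hψR : 0 < ψ R := hpos R hRpos
  refine ⟨R, hRpos, ⟨β * ψ R / Real.exp 1, by positivity, ?_⟩, ?_, ?_⟩
  · -- part 1
    intro x hx hdvd
    set N := x / R with hNdef
    have hNR : N * R = x := Nat.div_mul_cancel hdvd
    have hNpos : 0 < N := Nat.div_pos (Nat.le_of_dvd hx hdvd) hRpos
    have hmem : List.replicate N (R : ℤ) ≠ [] ∧
        (∀ y ∈ List.replicate N (R : ℤ), y ≠ 0) ∧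
        (List.replicate N (R : ℤ)).sum = (x : ℤ) := by
      refine ⟨?_, ?_, ?_⟩
      · apply List.ne_nil_of_length_pos
        simpa using hNpos
      · intro y hy
        rw [List.eq_of_mem_replicate hy]
        exact_mod_cast hRpos.ne'
      · rw [List.sum_replicate, nsmul_eq_mul]
        exact_mod_cast congrArg (Nat.cast : ℕ → ℤ) hNR
    refine le_trans (le_of_eq ?_)
      (ENNReal.le_tsum (⟨List.replicate N (R : ℤ), hmem⟩ :
        {l : List ℤ // l ≠ [] ∧ (∀ y ∈ l, y ≠ 0) ∧ l.sum = (x : ℤ)}))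
    simp only [List.length_replicate, List.map_replicate, List.prod_replicate]
    congr 1
    have hJR : ψ ((R : ℤ).natAbs) * Real.exp (-|((R : ℤ) : ℝ)|)
        = ψ R * Real.exp (-(R : ℝ)) := by
      rw [Int.natAbs_natCast]
      congr 2
      rw [abs_of_nonneg (by positivity)]
      push_cast; ring
    rw [hJR]
    have hxR : (x : ℝ) = (N : ℝ) * (R : ℝ) := by exact_mod_cast hNR.symm
    have hxdivR : (x : ℝ) / (R : ℝ) = (N : ℝ) := by
      rw [hxR, mul_div_assoc, div_self hRR.ne', mul_one]
    rw [hxdivR, hxR]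
    have hE : Real.exp (-((N : ℝ) * (R : ℝ)) + (N : ℝ))
        = Real.exp (-(R : ℝ)) ^ N * Real.exp 1 ^ N := by
      rw [← Real.exp_nat_mul, ← Real.exp_nat_mul, ← Real.exp_add]
      congr 1
      ring
    rw [hE]
    have he0 : Real.exp 1 ≠ 0 := (Real.exp_pos 1).ne'
    field_simp
    have hcan : Real.exp 1 ^ N * (Real.exp 1)⁻¹ ^ N = 1 := by
      rw [← mul_pow, mul_inv_cancel₀ he0, one_pow]
    linear_combination (β ^ N * ψ R ^ N * Real.exp (-(R : ℝ)) ^ N) * hcan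
  · -- part 2
    have : (0 : ℝ) < 1 / (R : ℝ) := by positivity
    linarith
  · -- part 3
    intro m hm
    rw [Filter.frequently_atTop]
    intro M
    have hm1 : m + 1 < 1 / (R : ℝ) := by linarith
    obtain ⟨u, hu0, hum, huR⟩ : ∃ u : ℝ, 0 ≤ u ∧ m + 1 ≤ u ∧ u * (R : ℝ) < 1 := by
      refine ⟨max (m + 1) 0, le_max_right _ _, le_max_left _ _, ?_⟩
      have hu1 : max (m + 1) 0 < 1 / (R : ℝ) := max_lt hm1 (by positivity)
      rw [lt_div_iff₀ hRR] at hu1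
      exact hu1
    obtain ⟨t, ht, htN⟩ : ∃ t : ℝ, 0 < t ∧ u * (R : ℝ) + t = 1 :=
      ⟨1 - u * (R : ℝ), by linarith, by ring⟩
    obtain ⟨N₀, hN₀⟩ := exists_nat_ge (max (16 / t ^ 2) (2 * Real.log R / t))
    obtain ⟨N, hN16, hNlog, hNpos, hMN⟩ :
        ∃ N : ℕ, 16 / t ^ 2 ≤ (N : ℝ) ∧ 2 * Real.log R / t ≤ (N : ℝ) ∧ 0 < N ∧ M ≤ N := by
      refine ⟨max (max N₀ 1) M, ?_, ?_, ?_, le_max_right _ _⟩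
      · refine le_trans (le_trans (le_max_left _ _) hN₀) ?_
        exact_mod_cast le_trans (le_max_left N₀ 1) (le_max_left _ M)
      · refine le_trans (le_trans (le_max_right _ _) hN₀) ?_
        exact_mod_cast le_trans (le_max_left N₀ 1) (le_max_left _ M)
      · exact lt_of_lt_of_le Nat.one_pos (le_trans (le_max_right N₀ 1) (le_max_left _ M))
    have hNR : (0 : ℝ) < (N : ℝ) := by exact_mod_cast hNpos
    obtain ⟨s, hs1, hs2, hkey⟩ := pathSum_pigeon ψ hpos β R N hRpos hNpos hβ.le
    refine ⟨s, le_trans hMN hs1, ?_⟩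
    refine le_trans ?_ hkey
    apply ENNReal.ofReal_le_ofReal
    have hsR : (0 : ℝ) ≤ (s : ℝ) := by positivity
    have hsNR : (s : ℝ) ≤ (N : ℝ) * (R : ℝ) := by exact_mod_cast hs2
    have hNRpos : (0 : ℝ) < (N : ℝ) * (R : ℝ) := by positivity
    have hsqrtN : 4 / t ≤ Real.sqrt (N : ℝ) := by
      rw [Real.le_sqrt (by positivity) hNR.le]
      have h16 : (4 / t) ^ 2 = 16 / t ^ 2 := by
        rw [div_pow]; norm_num
      rw [h16]; exact hN16
    have h4t : 4 ≤ t * Real.sqrt (N : ℝ) := by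
      rw [div_le_iff₀ ht] at hsqrtN
      linarith [hsqrtN]
    have hsqN : Real.sqrt (N : ℝ) ^ 2 = (N : ℝ) := Real.sq_sqrt hNR.le
    have hlogN : Real.log (N : ℝ) ≤ 2 * Real.sqrt (N : ℝ) := by
      have h1 : Real.log (N : ℝ) = 2 * Real.log (Real.sqrt (N : ℝ)) := by
        rw [← hsqN, Real.log_pow]
        push_cast
        rw [hsqN]
      rw [h1]
      have h2 := Real.log_le_sub_one_of_pos (Real.sqrt_pos.2 hNR)
      linarith
    have hlogN2 : Real.log (N : ℝ) ≤ t * (N : ℝ) / 2 := by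
      nlinarith [Real.sqrt_nonneg (N : ℝ), h4t, hsqN, hlogN]
    have hlogR : Real.log (R : ℝ) ≤ t * (N : ℝ) / 2 := by
      rw [div_le_iff₀ ht] at hNlog
      nlinarith [hNlog]
    have hlogNR : Real.log ((N : ℝ) * (R : ℝ)) ≤ t * (N : ℝ) := by
      rw [Real.log_mul hNR.ne' hRR.ne']
      linarith
    have hNRexp : (N : ℝ) * (R : ℝ) ≤ Real.exp (t * (N : ℝ)) := by
      calc (N : ℝ) * (R : ℝ) = Real.exp (Real.log ((N : ℝ) * (R : ℝ))) :=
            (Real.exp_log hNRpos).symm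
        _ ≤ Real.exp (t * (N : ℝ)) := Real.exp_le_exp.2 hlogNR
    have hbS : Real.exp ((N : ℝ)) ≤ (β * S) ^ N := by
      rw [← Real.exp_one_pow]
      exact pow_le_pow_left₀ (Real.exp_pos 1).le heS N
    have hmid : Real.exp (u * ((N : ℝ) * (R : ℝ))) ≤ (β * S) ^ N / ((N : ℝ) * (R : ℝ)) := by
      rw [le_div_iff₀ hNRpos]
      calc Real.exp (u * ((N : ℝ) * (R : ℝ))) * ((N : ℝ) * (R : ℝ))
          ≤ Real.exp (u * ((N : ℝ) * (R : ℝ))) * Real.exp (t * (N : ℝ)) :=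
            mul_le_mul_of_nonneg_left hNRexp (Real.exp_pos _).le
        _ = Real.exp (u * ((N : ℝ) * (R : ℝ)) + t * (N : ℝ)) := (Real.exp_add _ _).symm
        _ = Real.exp ((N : ℝ)) := by
            congr 1
            linear_combination (N : ℝ) * htN
        _ ≤ (β * S) ^ N := hbS
    have hstep1 : (m + 1) * (s : ℝ) ≤ u * ((N : ℝ) * (R : ℝ)) := by
      calc (m + 1) * (s : ℝ) ≤ u * (s : ℝ) := mul_le_mul_of_nonneg_right hum hsR
        _ ≤ u * ((N : ℝ) * (R : ℝ)) := mul_le_mul_of_nonneg_left hsNR hu0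
    calc Real.exp (m * (s : ℝ))
        = Real.exp ((m + 1) * (s : ℝ)) * Real.exp (-(s : ℝ)) := by
          rw [← Real.exp_add]; congr 1; ring
      _ ≤ ((β * S) ^ N / ((N : ℝ) * (R : ℝ))) * Real.exp (-(s : ℝ)) := by
          apply mul_le_mul_of_nonneg_right _ (Real.exp_pos _).le
          exact le_trans (Real.exp_le_exp.2 hstep1) hmid
      _ = β ^ N * (S ^ N / ((N : ℝ) * (R : ℝ))) * Real.exp (-(s : ℝ)) := by
          rw [mul_pow]; ring
end

section
/- For p ∈ (2, ∞) and the curve {(x,y) ∈ ℝ² : x^p + y^p = 1, x,y > 0} parametrized near a point (x₀, y₀) with x₀, y₀ > 0, the function f in the local parametrization u = s₀ + τv − f(τv)t̂ satisfies f(τv) = ((p−1)/2) · x₀^{p−2} y₀^{p−2} / (x₀^{2p−2} + y₀^{2p−2})^{3/2} · τ² + o(τ²) as τ → 0. -/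
open Asymptotics Filter

lemma quad {f f' : ℝ → ℝ} {a B : ℝ}
    (hd : ∀ᶠ x in nhds a, HasDerivAt f (f' x) x)
    (h2 : HasDerivAt f' B a) :
    (fun x => f x - f a - f' a * (x - a) - B / 2 * (x - a) ^ 2) =o[nhds a]
      fun x => (x - a) ^ 2 := by
  set g : ℝ → ℝ := fun x => f x - f a - f' a * (x - a) - B / 2 * (x - a) ^ 2 with hg
  set e : ℝ → ℝ := fun x => f' x - f' a - (x - a) * B with he
  have hge : ∀ᶠ x in nhds a, HasDerivAt g (e x) x := by
    filter_upwards [hd] with x hx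
    have h1 : HasDerivAt (fun x : ℝ => f' a * (x - a)) (f' a) x := by
      simpa using (((hasDerivAt_id x).sub_const a).const_mul (f' a))
    have h2' : HasDerivAt (fun x : ℝ => B / 2 * (x - a) ^ 2) (B * (x - a)) x := by
      have := (((hasDerivAt_id x).sub_const a).pow 2).const_mul (B / 2)
      refine this.congr_deriv ?_
      simp only [id_eq]
      ring
    have := ((hx.sub_const (f a)).sub h1).sub h2'
    refine this.congr_deriv ?_
    simp only [he]
    ring
  have heo : e =o[nhds a] fun x => x - a := by
    have := h2.hasFDerivAt.isLittleO
    simpa [he] using this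
  rw [isLittleO_iff]
  intro c hc
  rw [isLittleO_iff] at heo
  obtain ⟨δ, hδ, hball⟩ := Metric.eventually_nhds_iff.1
    ((heo hc).and hge)
  rw [Metric.eventually_nhds_iff]
  refine ⟨δ, hδ, fun x hx => ?_⟩
  have hseg : segment ℝ a x ⊆ Metric.ball a δ :=
    (convex_ball a δ).segment_subset (by simpa using hδ) hx
  have hbound : ∀ t ∈ segment ℝ a x, ‖e t‖ ≤ c * |x - a| := by
    intro t ht
    have h1 := (hball (hseg ht)).1
    have h2 : ‖t - a‖ ≤ ‖x - a‖ := by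
      obtain ⟨u, v, hu, hv, huv, rfl⟩ := ht
      have heq : u • a + v • x - a = v • (x - a) := by
        simp only [smul_eq_mul]
        linear_combination a * huv
      rw [heq, norm_smul]
      calc ‖v‖ * ‖x - a‖ ≤ 1 * ‖x - a‖ := by
            apply mul_le_mul_of_nonneg_right _ (norm_nonneg _)
            rw [Real.norm_eq_abs, abs_of_nonneg hv]; linarith
        _ = ‖x - a‖ := one_mul _
    calc ‖e t‖ ≤ c * ‖t - a‖ := h1
      _ ≤ c * |x - a| := by
          apply mul_le_mul_of_nonneg_left _ hc.le
          simpa using h2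
  have hmvt := Convex.norm_image_sub_le_of_norm_hasDerivWithin_le
    (f := g) (f' := e) (s := segment ℝ a x) (C := c * |x - a|)
    (fun t ht => ((hball (hseg ht)).2).hasDerivWithinAt)
    hbound (convex_segment a x) (left_mem_segment ℝ a x) (right_mem_segment ℝ a x)
  have hga : g a = 0 := by simp [hg]
  rw [hga, sub_zero] at hmvt
  calc ‖g x‖ ≤ c * |x - a| * ‖x - a‖ := hmvt
    _ = c * ‖(x - a) ^ 2‖ := by
        rw [Real.norm_eq_abs, Real.norm_eq_abs, abs_pow]
        ring


theorem stmt13 (p x₀ y₀ : ℝ) (hp : 2 < p) (hx : 0 < x₀) (hy : 0 < y₀)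
    (hs : x₀ ^ p + y₀ ^ p = 1) :
    ∃ f : ℝ → ℝ, f 0 = 0 ∧
      (∀ᶠ τ : ℝ in nhds 0,
        |x₀ + τ * (-(y₀ ^ (p - 1)) / Real.sqrt (x₀ ^ (2 * p - 2) + y₀ ^ (2 * p - 2)))
            - f τ * (x₀ ^ (p - 1) / Real.sqrt (x₀ ^ (2 * p - 2) + y₀ ^ (2 * p - 2)))| ^ p
          + |y₀ + τ * (x₀ ^ (p - 1) / Real.sqrt (x₀ ^ (2 * p - 2) + y₀ ^ (2 * p - 2)))
            - f τ * (y₀ ^ (p - 1) / Real.sqrt (x₀ ^ (2 * p - 2) + y₀ ^ (2 * p - 2)))| ^ p = 1) ∧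
      (fun τ : ℝ => f τ -
          ((p - 1) / 2 * (x₀ ^ (p - 2) * y₀ ^ (p - 2)
            / (x₀ ^ (2 * p - 2) + y₀ ^ (2 * p - 2)) ^ ((3 : ℝ) / 2))) * τ ^ 2)
        =o[nhds 0] (fun τ : ℝ => τ ^ 2) := by
  have hppos : (0:ℝ) < p := by linarith
  have hpne : p ≠ 0 := ne_of_gt hppos
  -- abbreviations
  set N2 : ℝ := x₀ ^ (2 * p - 2) + y₀ ^ (2 * p - 2) with hN2def
  set N : ℝ := Real.sqrt N2 with hNdef
  set c : ℝ := (p - 1) / 2 * (x₀ ^ (p - 2) * y₀ ^ (p - 2) / N2 ^ ((3 : ℝ) / 2)) with hcdef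
  have hN2pos : 0 < N2 := by
    have := Real.rpow_pos_of_pos hx (2 * p - 2)
    have := Real.rpow_pos_of_pos hy (2 * p - 2)
    rw [hN2def]; linarith
  have hNpos : 0 < N := Real.sqrt_pos.2 hN2pos
  have hNne : N ≠ 0 := ne_of_gt hNpos
  have hNsq : N ^ 2 = N2 := Real.sq_sqrt hN2pos.le
  -- basic rpow reductions to the atoms Xp = x₀ ^ p, Yp = y₀ ^ p
  have hXq : x₀ ^ (p - 1) = x₀ ^ p / x₀ := Real.rpow_sub_one hx.ne' p
  have hYq : y₀ ^ (p - 1) = y₀ ^ p / y₀ := Real.rpow_sub_one hy.ne' p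
  have hX2 : x₀ ^ (p - 2) = x₀ ^ p / x₀ ^ 2 := by
    rw [Real.rpow_sub hx p 2]
    norm_num [Real.rpow_two]
  have hY2 : y₀ ^ (p - 2) = y₀ ^ p / y₀ ^ 2 := by
    rw [Real.rpow_sub hy p 2]
    norm_num [Real.rpow_two]
  have hX22 : x₀ ^ (2 * p - 2) = (x₀ ^ p) ^ 2 / x₀ ^ 2 := by
    rw [Real.rpow_sub hx (2 * p) 2, show (2:ℝ) * p = p * 2 by ring,
      Real.rpow_mul hx.le p 2]
    norm_num [Real.rpow_two]
  have hY22 : y₀ ^ (2 * p - 2) = (y₀ ^ p) ^ 2 / y₀ ^ 2 := by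
    rw [Real.rpow_sub hy (2 * p) 2, show (2:ℝ) * p = p * 2 by ring,
      Real.rpow_mul hy.le p 2]
    norm_num [Real.rpow_two]
  have hY1p : y₀ ^ (1 - p) = y₀ / y₀ ^ p := by
    rw [Real.rpow_sub hy 1 p, Real.rpow_one]
  have hY12p : y₀ ^ (1 - 2 * p) = y₀ / (y₀ ^ p) ^ 2 := by
    rw [Real.rpow_sub hy 1 (2 * p), Real.rpow_one, show (2:ℝ) * p = p * 2 by ring,
      Real.rpow_mul hy.le p 2]
    norm_num [Real.rpow_two]
  have hXppos : 0 < x₀ ^ p := Real.rpow_pos_of_pos hx p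
  have hYppos : 0 < y₀ ^ p := Real.rpow_pos_of_pos hy p
  have hXqpos : 0 < x₀ ^ (p - 1) := Real.rpow_pos_of_pos hx _
  have hYqpos : 0 < y₀ ^ (p - 1) := Real.rpow_pos_of_pos hy _
  have h1x : 1 - x₀ ^ p = y₀ ^ p := by linarith
  have hN32 : N2 ^ ((3:ℝ) / 2) = N2 * N := by
    rw [show (3:ℝ)/2 = 1 + 1/2 by norm_num, Real.rpow_add hN2pos, Real.rpow_one,
      hNdef, Real.sqrt_eq_rpow]
  have hYaux : (y₀ ^ p) ^ ((p⁻¹:ℝ) - 1) = y₀ ^ (1 - p) := by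
    rw [← Real.rpow_mul hy.le, show p * (p⁻¹ - 1) = 1 - p by field_simp]
  have hYaux2 : (y₀ ^ p) ^ ((p⁻¹:ℝ) - 1 - 1) = y₀ ^ (1 - 2 * p) := by
    rw [← Real.rpow_mul hy.le, show p * (p⁻¹ - 1 - 1) = 1 - 2 * p by field_simp; ring]
  have hYinv : y₀ ^ (1 - p) * y₀ ^ (p - 1) = 1 := by
    rw [← Real.rpow_add hy]; norm_num
  have hXqq : x₀ ^ (p - 1) * x₀ ^ (p - 1) = x₀ ^ (2 * p - 2) := by
    rw [← Real.rpow_add hx]; ring_nf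
  have hYqq : y₀ ^ (p - 1) * y₀ ^ (p - 1) = y₀ ^ (2 * p - 2) := by
    rw [← Real.rpow_add hy]; ring_nf
  have hNN2 : N * N = x₀ ^ (p - 1) * x₀ ^ (p - 1) + y₀ ^ (p - 1) * y₀ ^ (p - 1) := by
    rw [hXqq, hYqq, ← hN2def, ← hNsq]; ring
  have h1xne : (1:ℝ) - x₀ ^ p ≠ 0 := by rw [h1x]; exact hYppos.ne'
  -- the curve as a graph
  set φ : ℝ → ℝ := fun x => (1 - x ^ p) ^ (p⁻¹ : ℝ) with hφdef
  have hφx₀ : φ x₀ = y₀ := by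
    rw [hφdef]; simp only []
    rw [h1x, Real.rpow_rpow_inv hy.le hpne]
  set ψ : ℝ → ℝ := fun x => -(p * x ^ (p - 1)) * p⁻¹ * (1 - x ^ p) ^ (p⁻¹ - 1) with hψdef
  set mval : ℝ := -(x₀ ^ (p - 1) * y₀ ^ (1 - p)) with hmdef
  set B : ℝ := -((p - 1) * x₀ ^ (p - 2) * y₀ ^ (1 - 2 * p)) with hBdef
  -- locally x > 0 and x^p < 1
  have hU : ∀ᶠ x in nhds x₀, 0 < x ∧ x ^ p < 1 := by
    have h1 : ∀ᶠ x : ℝ in nhds x₀, 0 < x :=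
      eventually_gt_nhds hx -- maybe wrong name
    have hcont : ContinuousAt (fun x : ℝ => x ^ p) x₀ :=
      Real.continuousAt_rpow_const x₀ p (Or.inl hx.ne')
    have h2 : ∀ᶠ x : ℝ in nhds x₀, x ^ p < 1 := by
      have hlt : x₀ ^ p < 1 := by linarith
      exact hcont.eventually_lt continuousAt_const hlt
    exact h1.and h2
  -- derivative of φ near x₀
  have hφd : ∀ᶠ x in nhds x₀, HasDerivAt φ (ψ x) x := by
    filter_upwards [hU] with x hxU
    have hx0 : x ≠ 0 := ne_of_gt hxU.1
    have h1ne : 1 - x ^ p ≠ 0 := by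
      have : 0 < 1 - x ^ p := by linarith [hxU.2]
      exact ne_of_gt this
    have hinner : HasDerivAt (fun x : ℝ => 1 - x ^ p) (-(p * x ^ (p - 1))) x :=
      (Real.hasDerivAt_rpow_const (Or.inl hx0)).const_sub 1
    have := hinner.rpow_const (p := p⁻¹) (Or.inl h1ne)
    simpa [hφdef, hψdef] using this
  -- strict derivative of φ at x₀
  have hφs : HasStrictDerivAt φ mval x₀ := by
    have hinner : HasStrictDerivAt (fun x : ℝ => 1 - x ^ p) (-(p * x₀ ^ (p - 1))) x₀ :=
      (Real.hasStrictDerivAt_rpow_const (Or.inl hx.ne')).const_sub 1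
    have houter : HasStrictDerivAt (fun u : ℝ => u ^ (p⁻¹ : ℝ))
        (p⁻¹ * (1 - x₀ ^ p) ^ ((p⁻¹ : ℝ) - 1)) (1 - x₀ ^ p) :=
      Real.hasStrictDerivAt_rpow_const (Or.inl (by rw [h1x]; exact hYppos.ne'))
    have hcomp := houter.comp x₀ hinner
    have : p⁻¹ * (1 - x₀ ^ p) ^ ((p⁻¹ : ℝ) - 1) * -(p * x₀ ^ (p - 1)) = mval := by
      rw [h1x, hYaux, hmdef]
      field_simp
    rw [this] at hcomp
    exact hcomp
  have hψx₀ : ψ x₀ = mval := by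
    rw [hψdef]
    simp only []
    rw [h1x, hYaux, hmdef]
    field_simp
  -- derivative of ψ at x₀
  have hψd : HasDerivAt ψ B x₀ := by
    have hu : HasDerivAt (fun x : ℝ => -(p * x ^ (p - 1)) * p⁻¹)
        (-(p * ((p - 1) * x₀ ^ (p - 1 - 1))) * p⁻¹) x₀ :=
      (((Real.hasDerivAt_rpow_const (p := p - 1) (Or.inl hx.ne')).const_mul p).neg).mul_const p⁻¹
    have hinner : HasDerivAt (fun x : ℝ => 1 - x ^ p) (-(p * x₀ ^ (p - 1))) x₀ :=
      (Real.hasDerivAt_rpow_const (Or.inl hx.ne')).const_sub 1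
    have hv : HasDerivAt (fun x : ℝ => (1 - x ^ p) ^ ((p⁻¹ : ℝ) - 1))
        ((-(p * x₀ ^ (p - 1))) * (p⁻¹ - 1) * (1 - x₀ ^ p) ^ ((p⁻¹ : ℝ) - 1 - 1)) x₀ :=
      hinner.rpow_const (Or.inl (by rw [h1x]; exact hYppos.ne'))
    have hprod := hu.mul hv
    have : -(p * ((p - 1) * x₀ ^ (p - 1 - 1))) * p⁻¹ * (1 - x₀ ^ p) ^ ((p⁻¹ : ℝ) - 1)
        + -(p * x₀ ^ (p - 1)) * p⁻¹ * ((-(p * x₀ ^ (p - 1))) * (p⁻¹ - 1)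
          * (1 - x₀ ^ p) ^ ((p⁻¹ : ℝ) - 1 - 1)) = B := by
      rw [h1x, hYaux, hYaux2, show p - 1 - 1 = p - 2 by ring, hBdef,
        hXq, hX2, hY1p, hY12p, ← h1x]
      field_simp
      ring
    rw [this] at hprod
    exact hprod
  -- second-order expansion of φ
  have hquad := quad hφd hψd
  rw [hφx₀, hψx₀] at hquad
  -- the tangent/normal coordinates
  set T : ℝ → ℝ := fun x =>
    ((x₀ - x) * y₀ ^ (p - 1) + (φ x - y₀) * x₀ ^ (p - 1)) / N with hTdef
  set F : ℝ → ℝ := fun x =>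
    -((x - x₀) * x₀ ^ (p - 1) + (φ x - y₀) * y₀ ^ (p - 1)) / N with hFdef
  set BT : ℝ := -(N / y₀ ^ (p - 1)) with hBTdef
  have hBTne : BT ≠ 0 := by
    rw [hBTdef]
    have : 0 < N / y₀ ^ (p - 1) := div_pos hNpos hYqpos
    linarith
  have hT0 : T x₀ = 0 := by
    rw [hTdef]; simp [hφx₀]
  have hF0 : F x₀ = 0 := by
    rw [hFdef]; simp [hφx₀]
  -- strict derivative of T
  have hTs : HasStrictDerivAt T BT x₀ := by
    have h1 : HasStrictDerivAt (fun x : ℝ => (x₀ - x) * y₀ ^ (p - 1))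
        (-1 * y₀ ^ (p - 1)) x₀ :=
      ((hasStrictDerivAt_id x₀).const_sub x₀).mul_const _
    have h2 : HasStrictDerivAt (fun x : ℝ => (φ x - y₀) * x₀ ^ (p - 1))
        ((mval - 0) * x₀ ^ (p - 1)) x₀ :=
      (hφs.sub (hasStrictDerivAt_const x₀ y₀)).mul_const _
    have h3 := (h1.add h2).div_const N
    have : (-1 * y₀ ^ (p - 1) + (mval - 0) * x₀ ^ (p - 1)) / N = BT := by
      rw [hmdef, hBTdef]
      field_simp
      linear_combination hNN2 - (x₀ ^ (p - 1) * x₀ ^ (p - 1)) * hYinv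
    rw [this] at h3
    exact h3
  -- the local inverse
  set xin : ℝ → ℝ := hTs.localInverse T BT x₀ hBTne with hxindef
  have hE := hTs.hasStrictFDerivAt_equiv hBTne
  have hxin0 : xin 0 = x₀ := by
    have := hE.localInverse_apply_image
    rw [hT0] at this
    exact this
  have hright : ∀ᶠ τ in nhds 0, T (xin τ) = τ := by
    have := hE.eventually_right_inverse
    rwa [hT0] at this
  have hcontxin : ContinuousAt xin 0 := by
    have := hE.localInverse_continuousAt
    rwa [hT0] at this
  have htend : Tendsto xin (nhds 0) (nhds x₀) := by
    have := hcontxin.tendsto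
    rwa [hxin0] at this
  refine ⟨fun τ => F (xin τ), by simp only []; rw [hxin0, hF0], ?_, ?_⟩
  · -- eventually on the curve
    filter_upwards [hright, htend.eventually hU] with τ hτ hUx
    set x := xin τ with hxdef
    obtain ⟨hx0, hxp1⟩ := hUx
    have hkey1 : x₀ + τ * (-(y₀ ^ (p - 1)) / N) - F x * (x₀ ^ (p - 1) / N) = x := by
      rw [← hτ]
      simp only [hTdef, hFdef]
      field_simp
      linear_combination (x₀ - x) * hNN2
    have hkey2 : y₀ + τ * (x₀ ^ (p - 1) / N) - F x * (y₀ ^ (p - 1) / N) = φ x := by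
      rw [← hτ]
      simp only [hTdef, hFdef]
      field_simp
      linear_combination (y₀ - φ x) * hNN2
    rw [hkey1, hkey2]
    have hφpos : 0 < φ x := Real.rpow_pos_of_pos (by linarith) _
    rw [abs_of_pos hx0, abs_of_pos hφpos, hφdef]
    simp only []
    rw [Real.rpow_inv_rpow (by linarith) hpne]
    ring
  · -- the asymptotics
    -- main claim at x₀
    have hlin : x₀ ^ (p - 1) + mval * y₀ ^ (p - 1) = 0 := by
      rw [hmdef]
      linear_combination (-(x₀ ^ (p - 1))) * hYinv
    have hA : y₀ ^ (p - 1) * (B / 2) / N + c * BT ^ 2 = 0 := by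
      have hN2N : N2 = N * N := by rw [← hNsq]; ring
      rw [hcdef, hBdef, hBTdef, hN32, hY12p, hYq, hY2, hN2N]
      field_simp
      ring
    have hTlin : (fun x => T x - BT * (x - x₀)) =o[nhds x₀] fun x => x - x₀ := by
      have h := hasDerivAt_iff_isLittleO.1 hTs.hasDerivAt
      refine h.congr' (Eventually.of_forall fun z => ?_) EventuallyEq.rfl
      simp only [hT0, smul_eq_mul]
      ring
    have hTbig : (fun x => T x + BT * (x - x₀)) =O[nhds x₀] fun x => x - x₀ := by
      have h1 : (fun x => T x) =O[nhds x₀] fun x => x - x₀ := by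
        have := hTs.hasDerivAt.hasFDerivAt.isBigO_sub
        simpa [hT0] using this
      have h2 : (fun x => BT * (x - x₀)) =O[nhds x₀] fun x => x - x₀ :=
        (isBigO_refl _ _).const_mul_left BT
      exact h1.add h2
    have h2nd : (fun x => c * ((BT * (x - x₀)) ^ 2 - T x ^ 2)) =o[nhds x₀]
        fun x => (x - x₀) ^ 2 := by
      have := (hTlin.mul_isBigO hTbig).const_mul_left (-c)
      refine this.congr' (Eventually.of_forall fun x => by ring) ?_
      exact Eventually.of_forall fun x => by ring
    have hφterm : (fun x => -(y₀ ^ (p - 1)) / N *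
        (φ x - y₀ - mval * (x - x₀) - B / 2 * (x - x₀) ^ 2)) =o[nhds x₀]
        fun x => (x - x₀) ^ 2 := hquad.const_mul_left _
    have hclaim : (fun x => F x - c * T x ^ 2) =o[nhds x₀] fun x => (x - x₀) ^ 2 := by
      refine (hφterm.add h2nd).congr' (Eventually.of_forall fun x => ?_) EventuallyEq.rfl
      simp only [hFdef]
      linear_combination ((x - x₀) / N) * hlin + (x - x₀) ^ 2 * hA
    have h1 := hclaim.comp_tendsto htend
    have hxinO : (fun τ => (xin τ - x₀) ^ 2) =O[nhds 0] fun τ => τ ^ 2 := by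
      have hxs : HasStrictDerivAt xin BT⁻¹ 0 := by
        have := hTs.to_localInverse
        rw [hT0] at this
        exact this hBTne
      have := hxs.hasDerivAt.hasFDerivAt.isBigO_sub
      rw [hxin0] at this
      have h2 := this.pow 2
      refine h2.trans (isBigO_of_le _ fun τ => ?_)
      simp
    have hfinal := h1.trans_isBigO hxinO
    refine hfinal.congr' ?_ EventuallyEq.rfl
    filter_upwards [hright] with τ hτ
    simp only [Function.comp]
    rw [hτ]
end
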